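/- Let α ∈ ℝ^{m_k} minimize ‖r(q(x_k)) + Σ_{i=1}^{m_k} α_i (r(q(x_k)) − r(q(x_{k−i})))‖ over all α ∈ ℝ^{m_k} (the AAr least-squares problem), define x_{k+1} = q(x_k) + Σ_{i=1}^{m_k} α_i (q(x_k) − q(x_{k−i})) and r_{k+1} = r(x_{k+1}). Then: (1) ⟨r_{k+1}, B (r_{k−j} − r_{k−i})⟩ = 0 for all indices 0 ≤ i, j ≤ m_k; (2) ‖r_{k+1}‖ ≤ ‖B r_k‖; and (3) if moreover ‖B‖ < 1 in the operator 2-norm and r_k ≠ 0, then ‖r_{k+1}‖ < ‖r_k‖, where B = I − P A. -/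

import Mathlib

open scoped RealInnerProductSpace

/-- Matrix-vector multiplication on Euclidean space. -/
noncomputable def mulV {n : ℕ} (M : Matrix (Fin n) (Fin n) ℝ)
    (v : EuclideanSpace ℝ (Fin n)) : EuclideanSpace ℝ (Fin n) :=
  Matrix.toEuclideanLin M v

open scoped Matrix.Norms.L2Operator

lemma mulV_sub {n : ℕ} (M : Matrix (Fin n) (Fin n) ℝ) (u v : EuclideanSpace ℝ (Fin n)) :
    mulV M (u - v) = mulV M u - mulV M v := map_sub _ u v

lemma mulV_add {n : ℕ} (M : Matrix (Fin n) (Fin n) ℝ) (u v : EuclideanSpace ℝ (Fin n)) :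
    mulV M (u + v) = mulV M u + mulV M v := map_add _ u v

lemma mulV_smul {n : ℕ} (M : Matrix (Fin n) (Fin n) ℝ) (c : ℝ) (v : EuclideanSpace ℝ (Fin n)) :
    mulV M (c • v) = c • mulV M v := map_smul _ c v

lemma mulV_one {n : ℕ} (v : EuclideanSpace ℝ (Fin n)) : mulV 1 v = v := by
  simp [mulV, Matrix.toEuclideanLin_apply, Matrix.one_mulVec]

lemma mulV_sub_mat {n : ℕ} (M N : Matrix (Fin n) (Fin n) ℝ) (v : EuclideanSpace ℝ (Fin n)) :
    mulV (M - N) v = mulV M v - mulV N v := by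
  unfold mulV; rw [map_sub, LinearMap.sub_apply]

lemma mulV_mul {n : ℕ} (M N : Matrix (Fin n) (Fin n) ℝ) (v : EuclideanSpace ℝ (Fin n)) :
    mulV (M * N) v = mulV M (mulV N v) := by
  simp [mulV, Matrix.toEuclideanLin_apply, Matrix.mulVec_mulVec]

lemma mulV_sum {n : ℕ} (M : Matrix (Fin n) (Fin n) ℝ) {ι : Type*} (s : Finset ι)
    (f : ι → EuclideanSpace ℝ (Fin n)) :
    mulV M (∑ i ∈ s, f i) = ∑ i ∈ s, mulV M (f i) := map_sum _ f s

lemma mulV_norm_le {n : ℕ} (M : Matrix (Fin n) (Fin n) ℝ) (v : EuclideanSpace ℝ (Fin n)) :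
    ‖mulV M v‖ ≤ ‖M‖ * ‖v‖ := M.l2_opNorm_mulVec v

lemma min_inner_zero {E : Type*} [NormedAddCommGroup E] [InnerProductSpace ℝ E] (u w : E)
    (h : ∀ t : ℝ, ‖u‖ ≤ ‖u + t • w‖) : ⟪u, w⟫ = 0 := by
  by_contra hc
  have hw : w ≠ 0 := by rintro rfl; simp at hc
  set c := ⟪u, w⟫ with hcdef
  have hwn : (0:ℝ) < ‖w‖ := norm_pos_iff.mpr hw
  have hw2 : (0:ℝ) < ‖w‖ ^ 2 := by positivity
  set t := -c / ‖w‖ ^ 2 with htdef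
  have hle := h t
  have hsq : ‖u + t • w‖ ^ 2 = ‖u‖ ^ 2 + 2 * (t * c) + t ^ 2 * ‖w‖ ^ 2 := by
    rw [norm_add_sq_real, real_inner_smul_right, norm_smul, Real.norm_eq_abs, mul_pow,
      sq_abs, ← hcdef]
  have hval : ‖u + t • w‖ ^ 2 = ‖u‖ ^ 2 - c ^ 2 / ‖w‖ ^ 2 := by
    rw [hsq, htdef]; field_simp; ring
  have h2 : ‖u‖ ^ 2 ≤ ‖u + t • w‖ ^ 2 :=
    pow_le_pow_left₀ (norm_nonneg _) hle 2
  have hcpos : 0 < c ^ 2 := pow_pos (abs_pos.mpr hc) 2 |>.trans_le (by rw [sq_abs])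
  rw [hval] at h2
  have : 0 < c ^ 2 / ‖w‖ ^ 2 := div_pos hcpos hw2
  linarith

/-- orthogonality, norm bound and strict decrease for the AAr residual. -/
theorem stmt_15 {n : ℕ} (A P : Matrix (Fin n) (Fin n) ℝ)
    (hA : IsUnit A.det) (hP : IsUnit P.det)
    (b : EuclideanSpace ℝ (Fin n))
    (q r : EuclideanSpace ℝ (Fin n) → EuclideanSpace ℝ (Fin n))
    (hq : ∀ y, q y = y + mulV P (b - mulV A y))
    (hr : ∀ y, r y = y - q y)
    (B : Matrix (Fin n) (Fin n) ℝ) (hB : B = 1 - P * A)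
    (k m : ℕ) (hm : m ≤ k)
    (x : ℕ → EuclideanSpace ℝ (Fin n))
    (α : ℕ → ℝ)
    (hopt : ∀ a : ℕ → ℝ,
      ‖r (q (x k)) + ∑ i ∈ Finset.Icc 1 m, α i • (r (q (x k)) - r (q (x (k - i))))‖ ≤
      ‖r (q (x k)) + ∑ i ∈ Finset.Icc 1 m, a i • (r (q (x k)) - r (q (x (k - i))))‖)
    (xk1 rk1 : EuclideanSpace ℝ (Fin n))
    (hx : xk1 = q (x k) + ∑ i ∈ Finset.Icc 1 m, α i • (q (x k) - q (x (k - i))))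
    (hrk1 : rk1 = r xk1) :
    (∀ i j, i ≤ m → j ≤ m → ⟪rk1, mulV B (r (x (k - j)) - r (x (k - i)))⟫ = 0) ∧
    ‖rk1‖ ≤ ‖mulV B (r (x k))‖ ∧
    (‖B‖ < 1 → r (x k) ≠ 0 → ‖rk1‖ < ‖r (x k)‖) := by
  -- affine form of r
  have hrE : ∀ y, r y = mulV (P * A) y - mulV P b := by
    intro y
    rw [hr y, hq y]
    have h1 : mulV P (b - mulV A y) = mulV P b - mulV (P * A) y := by
      rw [mulV_sub, mulV_mul]
    rw [h1]; abel
  have hdiff : ∀ u v, r u - r v = mulV (P * A) (u - v) := by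
    intro u v
    rw [hrE u, hrE v, mulV_sub]; abel
  have hrq : ∀ y, r (q y) = mulV B (r y) := by
    intro y
    have h1 : q y = y - r y := by rw [hr y]; abel
    rw [hrE (q y), h1, hB, mulV_sub_mat, mulV_one, mulV_sub, hrE y]
    abel
  set v0 := r (q (x k)) with hv0
  set w : ℕ → EuclideanSpace ℝ (Fin n) := fun i => v0 - r (q (x (k - i))) with hwdef
  have key : rk1 = v0 + ∑ i ∈ Finset.Icc 1 m, α i • w i := by
    rw [hrk1, hx]
    have h1 : r (q (x k) + ∑ i ∈ Finset.Icc 1 m, α i • (q (x k) - q (x (k - i)))) =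
        v0 + mulV (P * A) (∑ i ∈ Finset.Icc 1 m, α i • (q (x k) - q (x (k - i)))) := by
      rw [hrE, mulV_add, hv0, hrE (q (x k))]; abel
    rw [h1]
    congr 1
    rw [mulV_sum]
    apply Finset.sum_congr rfl
    intro i _
    rw [mulV_smul, ← hdiff, hwdef]
  -- orthogonality to each w i, 1 ≤ i ≤ m
  have horth : ∀ i, i ≤ m → ⟪rk1, w i⟫ = 0 := by
    intro i him
    rcases Nat.eq_zero_or_pos i with rfl | hi1
    · simp [hwdef, hv0]
    apply min_inner_zero
    intro t
    have hmem : i ∈ Finset.Icc 1 m := Finset.mem_Icc.mpr ⟨hi1, him⟩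
    have hsum : v0 + ∑ j ∈ Finset.Icc 1 m,
        (α j + if j = i then t else 0) • w j = rk1 + t • w i := by
      rw [key]
      rw [Finset.sum_congr rfl (fun j _ => add_smul (α j) _ (w j)),
        Finset.sum_add_distrib]
      have : ∑ j ∈ Finset.Icc 1 m, (if j = i then t else 0) • w j = t • w i := by
        rw [Finset.sum_eq_single_of_mem i hmem]
        · simp
        · intro j _ hji; simp [hji]
      rw [this]; abel
    have := hopt (fun j => α j + if j = i then t else 0)
    rw [← key] at this
    calc ‖rk1‖ ≤ ‖v0 + ∑ j ∈ Finset.Icc 1 m,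
        (α j + if j = i then t else 0) • w j‖ := this
      _ = ‖rk1 + t • w i‖ := by rw [hsum]
  refine ⟨?_, ?_, ?_⟩
  · intro i j hi hj
    have hBw : mulV B (r (x (k - j)) - r (x (k - i))) = w i - w j := by
      rw [mulV_sub, ← hrq, ← hrq, hwdef]
      exact (sub_sub_sub_cancel_left _ _ _).symm
    rw [hBw, inner_sub_right, horth i hi, horth j hj, sub_zero]
  · have h0 := hopt 0
    rw [← key] at h0
    simp only [Pi.zero_apply, zero_smul, Finset.sum_const_zero, add_zero] at h0
    calc ‖rk1‖ ≤ ‖v0‖ := h0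
      _ = ‖mulV B (r (x k))‖ := by rw [hv0, hrq]
  · intro hBlt hne
    have h0 := hopt 0
    rw [← key] at h0
    simp only [Pi.zero_apply, zero_smul, Finset.sum_const_zero, add_zero] at h0
    have h1 : ‖v0‖ ≤ ‖B‖ * ‖r (x k)‖ := by
      rw [hv0, hrq]; exact mulV_norm_le B (r (x k))
    have h2 : ‖B‖ * ‖r (x k)‖ < 1 * ‖r (x k)‖ :=
      mul_lt_mul_of_pos_right hBlt (norm_pos_iff.mpr hne)
    calc ‖rk1‖ ≤ ‖v0‖ := h0
      _ ≤ ‖B‖ * ‖r (x k)‖ := h1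
      _ < 1 * ‖r (x k)‖ := h2
      _ = ‖r (x k)‖ := one_mul _
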